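/- Criterion for Poisson commutativity: let q be a finite-dimensional Lie algebra with an f-stable decomposition q = f ⊕ m. The subalgebra Z_{(q,f)} generated by the bi-homogeneous components of all H ∈ S(q)^q is Poisson commutative if and only if for every γ ∈ q*, all nonzero scalars s, s', and all H, H' ∈ S(q)^q, one has γ_f([(d_{φ_s(γ)}H)_f, (d_{φ_{s'}(γ)}H')_f]) = 0, where γ = γ_f + γ_m with γ_f|_m = 0, γ_m|_f = 0, φ_s(γ) = γ_f + sγ_m, and (·)_f is the projection of q onto f. -/

import Mathlib

namespace PoissonLie

variable {k : Type*} [Field k] [CharZero k] [IsAlgClosed k]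
variable {q : Type*} [LieRing q] [LieAlgebra k q]
variable {n : ℕ}

/-- The degree-one polynomial function on `q*` corresponding to `x ∈ q`. -/
noncomputable def lin (b : Module.Basis (Fin n) k q) (x : q) : MvPolynomial (Fin n) k :=
  ∑ i, MvPolynomial.C (b.repr x i) * MvPolynomial.X i

/-- The Lie--Poisson bracket on `S(q) = k[q*]`, in coordinates. -/
noncomputable def pbr (b : Module.Basis (Fin n) k q) (F G : MvPolynomial (Fin n) k) :
    MvPolynomial (Fin n) k :=
  ∑ i, ∑ j, MvPolynomial.pderiv i F * MvPolynomial.pderiv j G * lin b ⁅b i, b j⁆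

/-- The Poisson centre `S(q)^q`. -/
def poissonCentre (b : Module.Basis (Fin n) k q) : Set (MvPolynomial (Fin n) k) :=
  {H | ∀ x : q, pbr b H (lin b x) = 0}

/-- The `(i,j)` bi-homogeneous component of a polynomial, relative to the splitting of the
variables into the set `S` (spanning `f`) and its complement (spanning `m`). -/
noncomputable def biComponent (S : Finset (Fin n)) (i j : ℕ)
    (H : MvPolynomial (Fin n) k) : MvPolynomial (Fin n) k :=
  ∑ m ∈ H.support.filter
      (fun m => (∑ a ∈ S, m a) = i ∧ (∑ a ∈ Sᶜ, m a) = j),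
    MvPolynomial.monomial m (MvPolynomial.coeff m H)

/-- The subalgebra `Z_{(q,f)}` generated by the bi-homogeneous components of all elements
of the Poisson centre. -/
noncomputable def Zalg (b : Module.Basis (Fin n) k q) (S : Finset (Fin n)) :
    Subalgebra k (MvPolynomial (Fin n) k) :=
  Algebra.adjoin k {P : MvPolynomial (Fin n) k |
    ∃ H ∈ poissonCentre b, ∃ i j : ℕ, P = biComponent S i j H}

/-- Evaluation of a polynomial on `q*` (in coordinates w.r.t. the basis `b`) at `γ : q*`. -/
noncomputable def evalAt (b : Module.Basis (Fin n) k q) (γ : Module.Dual k q) :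
    MvPolynomial (Fin n) k →ₐ[k] k :=
  MvPolynomial.aeval (fun i => γ (b i))

/-- The differential at `γ ∈ q*` of a polynomial function `F` on `q*`. -/
noncomputable def diffAt (b : Module.Basis (Fin n) k q) (γ : Module.Dual k q)
    (F : MvPolynomial (Fin n) k) : q :=
  ∑ i, (evalAt b γ (MvPolynomial.pderiv i F)) • b i

/-- The linear map `φ_s : q → q`, identity on `f` and `s · id` on `m`. -/
noncomputable def phiQ (f m : Submodule k q) (h : IsCompl f m) (s : k) : q →ₗ[k] q :=
  (f.subtype ∘ₗ f.linearProjOfIsCompl m h) + s • (m.subtype ∘ₗ m.linearProjOfIsCompl f h.symm)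

/-- The projection of `q` onto `f` along `m`. -/
noncomputable def projF (f m : Submodule k q) (h : IsCompl f m) : q →ₗ[k] q :=
  f.subtype ∘ₗ f.linearProjOfIsCompl m h

/-- `φ_s(γ) = γ_f + s·γ_m` on the dual space; it equals `γ ∘ φ_s`. -/
noncomputable def phiDual (f m : Submodule k q) (h : IsCompl f m) (s : k)
    (γ : Module.Dual k q) : Module.Dual k q :=
  γ ∘ₗ phiQ f m h s

set_option linter.unusedSectionVars false

section Aux
variable (b : Module.Basis (Fin n) k q)

open MvPolynomial

lemma sum_lie' {α : Type*} (s : Finset α) (f : α → q) (y : q) :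
    ⁅∑ a ∈ s, f a, y⁆ = ∑ a ∈ s, ⁅f a, y⁆ :=
  map_sum (AddMonoidHom.mk' (fun x => ⁅x, y⁆) (fun a c => add_lie a c y)) f s

lemma lie_sum' {α : Type*} (s : Finset α) (f : α → q) (y : q) :
    ⁅y, ∑ a ∈ s, f a⁆ = ∑ a ∈ s, ⁅y, f a⁆ :=
  map_sum (AddMonoidHom.mk' (fun x => ⁅y, x⁆) (fun a c => lie_add y a c)) f s

variable (b : Module.Basis (Fin n) k q)

lemma evalAt_lin (γ : Module.Dual k q) (x : q) : evalAt b γ (lin b x) = γ x := by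
  conv_rhs => rw [← b.sum_repr x]
  simp only [evalAt, lin, map_sum, map_mul, aeval_C, aeval_X, Algebra.algebraMap_self_apply,
    map_smul, smul_eq_mul]

lemma pderiv_lin (j : Fin n) (x : q) : pderiv j (lin b x) = C (b.repr x j) := by
  simp only [lin, map_sum]
  rw [Finset.sum_eq_single j]
  · simp
  · intro i _ hij; simp [pderiv_X, Pi.single_apply, hij]
  · simp

lemma evalAt_pbr (γ : Module.Dual k q) (F G : MvPolynomial (Fin n) k) :
    evalAt b γ (pbr b F G) = γ ⁅diffAt b γ F, diffAt b γ G⁆ := by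
  simp only [pbr, map_sum, map_mul, evalAt_lin, diffAt, sum_lie', lie_sum', lie_smul, smul_lie,
    map_smul, smul_eq_mul, Finset.mul_sum]
  rw [Finset.sum_comm]
  refine Finset.sum_congr rfl fun i _ => Finset.sum_congr rfl fun j _ => ?_
  ring

lemma aeval_eq_eval' {N : ℕ} (x : Fin N → k) (F : MvPolynomial (Fin N) k) :
    MvPolynomial.aeval x F = MvPolynomial.eval x F := by
  rw [← MvPolynomial.coe_aeval_eq_eval]; rfl

lemma eq_zero_of_forall_evalAt {F : MvPolynomial (Fin n) k}
    (hF : ∀ γ : Module.Dual k q, evalAt b γ F = 0) : F = 0 := by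
  apply MvPolynomial.funext (q := 0)
  intro x
  have hx : (fun i => (∑ j, x j • b.coord j) (b i)) = x := by
    funext i
    simp [Module.Basis.coord_apply, Finsupp.single_apply]
  have := hF (∑ j, x j • b.coord j)
  rw [evalAt, hx, aeval_eq_eval'] at this
  simpa using this

lemma diffAt_lin (γ : Module.Dual k q) (x : q) : diffAt b γ (lin b x) = x := by
  conv_rhs => rw [← b.sum_repr x]
  simp only [diffAt, pderiv_lin, evalAt, aeval_C, Algebra.algebraMap_self_apply]

lemma mem_poissonCentre_iff (H : MvPolynomial (Fin n) k) :
    H ∈ poissonCentre b ↔ ∀ (γ : Module.Dual k q) (x : q), γ ⁅diffAt b γ H, x⁆ = 0 := by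
  constructor
  · intro hH γ x
    have := congrArg (evalAt b γ) (hH x)
    rwa [evalAt_pbr, diffAt_lin, map_zero] at this
  · intro hH x
    apply eq_zero_of_forall_evalAt b
    intro γ
    rw [evalAt_pbr, diffAt_lin]
    exact hH γ x

section B
variable {α : Type*}

lemma pbr_sum_left (s : Finset α) (F : α → MvPolynomial (Fin n) k) (G : MvPolynomial (Fin n) k) :
    pbr b (∑ a ∈ s, F a) G = ∑ a ∈ s, pbr b (F a) G := by
  unfold pbr
  conv_rhs => rw [Finset.sum_comm]
  refine Finset.sum_congr rfl fun i _ => ?_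
  conv_rhs => rw [Finset.sum_comm]
  refine Finset.sum_congr rfl fun j _ => ?_
  rw [map_sum, Finset.sum_mul, Finset.sum_mul]

lemma pbr_sum_right (s : Finset α) (F : MvPolynomial (Fin n) k) (G : α → MvPolynomial (Fin n) k) :
    pbr b F (∑ a ∈ s, G a) = ∑ a ∈ s, pbr b F (G a) := by
  unfold pbr
  conv_rhs => rw [Finset.sum_comm]
  refine Finset.sum_congr rfl fun i _ => ?_
  conv_rhs => rw [Finset.sum_comm]
  refine Finset.sum_congr rfl fun j _ => ?_
  rw [map_sum, Finset.mul_sum, Finset.sum_mul]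

lemma pbr_smul_left (c : k) (F G : MvPolynomial (Fin n) k) :
    pbr b (c • F) G = c • pbr b F G := by
  unfold pbr
  rw [Finset.smul_sum]
  refine Finset.sum_congr rfl fun i _ => ?_
  rw [Finset.smul_sum]
  refine Finset.sum_congr rfl fun j _ => ?_
  rw [Derivation.map_smul, smul_mul_assoc, smul_mul_assoc]

lemma pbr_smul_right (c : k) (F G : MvPolynomial (Fin n) k) :
    pbr b F (c • G) = c • pbr b F G := by
  unfold pbr
  rw [Finset.smul_sum]
  refine Finset.sum_congr rfl fun i _ => ?_
  rw [Finset.smul_sum]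
  refine Finset.sum_congr rfl fun j _ => ?_
  rw [Derivation.map_smul, mul_smul_comm, smul_mul_assoc]

lemma pbr_add_left (F F' G : MvPolynomial (Fin n) k) :
    pbr b (F + F') G = pbr b F G + pbr b F' G := by
  simp only [pbr, map_add, add_mul, Finset.sum_add_distrib]

lemma pbr_add_right (F G G' : MvPolynomial (Fin n) k) :
    pbr b F (G + G') = pbr b F G + pbr b F G' := by
  simp only [pbr, map_add, add_mul, mul_add, Finset.sum_add_distrib]

lemma pbr_C_left (c : k) (G : MvPolynomial (Fin n) k) : pbr b (C c) G = 0 := by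
  simp [pbr]

lemma pbr_C_right (c : k) (F : MvPolynomial (Fin n) k) : pbr b F (C c) = 0 := by
  simp [pbr]

lemma pbr_zero_left (G : MvPolynomial (Fin n) k) : pbr b 0 G = 0 := by
  simp [pbr]

lemma pbr_mul_left (F F' G : MvPolynomial (Fin n) k) :
    pbr b (F * F') G = F * pbr b F' G + F' * pbr b F G := by
  simp only [pbr, Finset.mul_sum, ← Finset.sum_add_distrib]
  refine Finset.sum_congr rfl fun i _ => Finset.sum_congr rfl fun j _ => ?_
  rw [pderiv_mul]; ring

lemma pbr_mul_right (F G G' : MvPolynomial (Fin n) k) :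
    pbr b F (G * G') = G * pbr b F G' + G' * pbr b F G := by
  simp only [pbr, Finset.mul_sum, ← Finset.sum_add_distrib]
  refine Finset.sum_congr rfl fun i _ => Finset.sum_congr rfl fun j _ => ?_
  rw [pderiv_mul]; ring

lemma pbr_adjoin_eq_zero (T : Set (MvPolynomial (Fin n) k))
    (hT : ∀ P ∈ T, ∀ P' ∈ T, pbr b P P' = 0) :
    ∀ F ∈ Algebra.adjoin k T, ∀ G ∈ Algebra.adjoin k T, pbr b F G = 0 := by
  have step : ∀ G : MvPolynomial (Fin n) k, (∀ P ∈ T, pbr b P G = 0) →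
      ∀ F ∈ Algebra.adjoin k T, pbr b F G = 0 := by
    intro G hG F hF
    induction hF using Algebra.adjoin_induction with
    | mem x hx => exact hG x hx
    | algebraMap r => simpa [MvPolynomial.algebraMap_eq] using pbr_C_left b r G
    | add x y hx hy ihx ihy => rw [pbr_add_left, ihx, ihy, add_zero]
    | mul x y hx hy ihx ihy => rw [pbr_mul_left, ihx, ihy, mul_zero, mul_zero, add_zero]
  intro F hF G hG
  induction hG using Algebra.adjoin_induction with
  | mem x hx => exact step x (fun P hP => hT P hP x hx) F hF
  | algebraMap r => simpa [MvPolynomial.algebraMap_eq] using pbr_C_right b r F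
  | add x y hx hy ihx ihy => rw [pbr_add_right, ihx, ihy, add_zero]
  | mul x y hx hy ihx ihy => rw [pbr_mul_right, ihx, ihy, mul_zero, mul_zero, add_zero]

end B

section C

noncomputable def sigma (S : Finset (Fin n)) (t s : k) :
    MvPolynomial (Fin n) k →ₐ[k] MvPolynomial (Fin n) k :=
  MvPolynomial.aeval (fun a => (if a ∈ S then t else s) • MvPolynomial.X a)

variable (S : Finset (Fin n))

lemma sigma_X (t s : k) (a : Fin n) :
    sigma S t s (X a) = (if a ∈ S then t else s) • X a := by
  simp [sigma]

lemma sigma_C (t s c : k) : sigma S t s (C c) = C c := by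
  simp [sigma, MvPolynomial.algebraMap_eq]

lemma sigma_comp (t s t' s' : k) (F : MvPolynomial (Fin n) k) :
    sigma S t' s' (sigma S t s F) = sigma S (t' * t) (s' * s) F := by
  have : (sigma S t' s').comp (sigma S t s) = sigma (n := n) S (t' * t) (s' * s) := by
    apply MvPolynomial.algHom_ext
    intro i
    by_cases hi : i ∈ S <;>
      simp [sigma, hi, smul_smul, mul_comm]
  exact DFunLike.congr_fun this F

lemma pderiv_sigma (t s : k) (a : Fin n) (F : MvPolynomial (Fin n) k) :
    pderiv a (sigma S t s F) = (if a ∈ S then t else s) • sigma S t s (pderiv a F) := by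
  induction F using MvPolynomial.induction_on with
  | C c => simp [sigma_C]
  | add p r hp hr => simp only [map_add, hp, hr, smul_add]
  | mul_X p j hp =>
    rcases eq_or_ne j a with rfl | hja
    · simp only [map_mul, pderiv_mul, hp, sigma_X, pderiv_X_self, mul_one, Derivation.map_smul,
        map_add, smul_mul_assoc, mul_smul_comm, smul_smul, smul_add, ite_self]
    · have hd : pderiv a (X j : MvPolynomial (Fin n) k) = 0 := by
        rw [pderiv_X]; simp [Pi.single_apply, hja]
      simp only [map_mul, pderiv_mul, hp, sigma_X, hd, mul_zero, add_zero, smul_zero,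
        Derivation.map_smul, smul_mul_assoc, mul_smul_comm, smul_smul, ite_self]
      rw [mul_comm]

lemma sigma_monomial (t s : k) (m : Fin n →₀ ℕ) (c : k) :
    sigma S t s (monomial m c)
      = (t ^ (∑ a ∈ S, m a) * s ^ (∑ a ∈ Sᶜ, m a)) • monomial m c := by
  have key : (∏ a : Fin n, (if a ∈ S then t else s) ^ m a)
      = t ^ (∑ a ∈ S, m a) * s ^ (∑ a ∈ Sᶜ, m a) := by
    rw [← Finset.prod_mul_prod_compl S]
    congr 1
    · rw [← Finset.prod_pow_eq_pow_sum]
      exact Finset.prod_congr rfl fun a ha => by rw [if_pos ha]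
    · rw [← Finset.prod_pow_eq_pow_sum]
      exact Finset.prod_congr rfl fun a ha => by rw [if_neg (Finset.mem_compl.mp ha)]
  rw [monomial_eq, Finsupp.prod_pow, map_mul, sigma_C, map_prod]
  have hx : ∀ x : Fin n, sigma S t s (X x ^ m x)
      = C ((if x ∈ S then t else s) ^ m x) * X x ^ m x := fun x => by
    rw [map_pow, sigma_X, smul_pow, MvPolynomial.smul_eq_C_mul]
  simp only [hx]
  rw [Finset.prod_mul_distrib,
    show (∏ x : Fin n, C ((if x ∈ S then t else s) ^ m x) : MvPolynomial (Fin n) k)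
      = C (∏ x : Fin n, (if x ∈ S then t else s) ^ m x) from
      (map_prod (MvPolynomial.C : k →+* MvPolynomial (Fin n) k) _ _).symm,
    key, MvPolynomial.smul_eq_C_mul]
  ring

lemma sigma_eq_sum_biComponent (t s : k) (H : MvPolynomial (Fin n) k)
    (D : ℕ) (hD : H.totalDegree ≤ D) :
    sigma S t s H = ∑ i ∈ Finset.range (D+1), ∑ j ∈ Finset.range (D+1),
      (t ^ i * s ^ j) • biComponent S i j H := by
  have hmem : ∀ m ∈ H.support,
      ((∑ a ∈ S, m a, ∑ a ∈ Sᶜ, m a) : ℕ × ℕ) ∈ Finset.range (D+1) ×ˢ Finset.range (D+1) := by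
    intro m hm
    have h1 : (∑ a : Fin n, m a) ≤ D := by
      have h2 := MvPolynomial.le_totalDegree hm
      rw [Finsupp.sum_fintype] at h2
      · exact h2.trans hD
      · intro a; rfl
    refine Finset.mem_product.mpr ⟨Finset.mem_range.mpr ?_, Finset.mem_range.mpr ?_⟩
    · exact Nat.lt_succ_of_le ((Finset.sum_le_sum_of_subset (Finset.subset_univ S)).trans h1)
    · exact Nat.lt_succ_of_le ((Finset.sum_le_sum_of_subset (Finset.subset_univ Sᶜ)).trans h1)
  calc sigma S t s H
      = ∑ m ∈ H.support,
          (t ^ (∑ a ∈ S, m a) * s ^ (∑ a ∈ Sᶜ, m a)) • monomial m (coeff m H) := by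
        conv_lhs => rw [MvPolynomial.as_sum H]
        rw [map_sum]
        exact Finset.sum_congr rfl fun m _ => sigma_monomial S t s m _
    _ = ∑ p ∈ Finset.range (D+1) ×ˢ Finset.range (D+1),
          ∑ m ∈ H.support.filter (fun m => ((∑ a ∈ S, m a, ∑ a ∈ Sᶜ, m a) : ℕ × ℕ) = p),
          (t ^ (∑ a ∈ S, m a) * s ^ (∑ a ∈ Sᶜ, m a)) • monomial m (coeff m H) :=
        (Finset.sum_fiberwise_of_maps_to hmem _).symm
    _ = _ := by
        rw [Finset.sum_product]
        refine Finset.sum_congr rfl fun i hi => Finset.sum_congr rfl fun j hj => ?_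
        rw [biComponent, Finset.smul_sum]
        refine Finset.sum_congr ?_ fun m hm => ?_
        · apply Finset.filter_congr
          intro m _
          simp [Prod.ext_iff]
        · obtain ⟨-, h1, h2⟩ := Finset.mem_filter.mp hm
          rw [h1, h2]

lemma biComponent_eq_zero_i (i j : ℕ) (H : MvPolynomial (Fin n) k)
    (hi : H.totalDegree < i) : biComponent S i j H = 0 := by
  rw [biComponent, Finset.filter_false_of_mem, Finset.sum_empty]
  intro m hm hcond
  have h2 := MvPolynomial.le_totalDegree hm
  rw [Finsupp.sum_fintype] at h2
  · have : (∑ a ∈ S, m a) ≤ H.totalDegree :=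
      (Finset.sum_le_sum_of_subset (Finset.subset_univ S)).trans h2
    omega
  · intro a; rfl

end C

section D

variable {f m : Submodule k q} (h : IsCompl f m)

lemma projF_mem (x : q) : projF f m h x ∈ f := by
  simp only [projF, LinearMap.comp_apply, Submodule.subtype_apply]
  exact Submodule.coe_mem _

lemma projF_eq_self {x : q} (hx : x ∈ f) : projF f m h x = x := by
  have h1 := Submodule.linearProjOfIsCompl_apply_left h ⟨x, hx⟩
  simp only [projF, LinearMap.comp_apply, Submodule.subtype_apply]
  exact congrArg _ h1

lemma projF_eq_zero {x : q} (hx : x ∈ m) : projF f m h x = 0 := by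
  simp only [projF, LinearMap.comp_apply, Submodule.subtype_apply]
  rw [show f.linearProjOfIsCompl m h x = 0 from Submodule.projectionOnto_apply_of_mem_right h hx]
  rfl

lemma sub_projF_mem (x : q) : x - projF f m h x ∈ m := by
  have h1 := Submodule.projection_add_projection_eq_self h x
  have h2 : x - projF f m h x = ↑(m.linearProjOfIsCompl f h.symm x) := by
    simp only [projF, LinearMap.comp_apply, Submodule.subtype_apply]
    rw [sub_eq_iff_eq_add']
    exact h1.symm
  rw [h2]; exact Submodule.coe_mem _

lemma phiQ_apply (s : k) (x : q) :
    phiQ f m h s x = projF f m h x + s • (x - projF f m h x) := by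
  have h1 := Submodule.projection_add_projection_eq_self h x
  have h2 : x - projF f m h x = ↑(m.linearProjOfIsCompl f h.symm x) := by
    simp only [projF, LinearMap.comp_apply, Submodule.subtype_apply]
    rw [sub_eq_iff_eq_add']
    exact h1.symm
  rw [h2]
  simp only [phiQ, projF, LinearMap.add_apply, LinearMap.comp_apply, LinearMap.smul_apply,
    Submodule.subtype_apply]

lemma phiQ_of_mem_f {x : q} (s : k) (hx : x ∈ f) : phiQ f m h s x = x := by
  rw [phiQ_apply, projF_eq_self h hx]
  simp

lemma phiQ_of_mem_m {x : q} (s : k) (hx : x ∈ m) : phiQ f m h s x = s • x := by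
  rw [phiQ_apply, projF_eq_zero h hx]
  simp

lemma phiDual_apply (s : k) (γ : Module.Dual k q) (x : q) :
    phiDual f m h s γ x = γ (projF f m h x) + s * (γ x - γ (projF f m h x)) := by
  simp only [phiDual, LinearMap.comp_apply, phiQ_apply h s x, map_add, map_smul, map_sub,
    smul_eq_mul]

variable (b : Module.Basis (Fin n) k q) (S : Finset (Fin n))
variable (hbf : ∀ i ∈ S, b i ∈ f) (hbm : ∀ i ∉ S, b i ∈ m)

include hbf hbm in
lemma evalAt_phiDual (s : k) (γ : Module.Dual k q) (F : MvPolynomial (Fin n) k) :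
    evalAt b (phiDual f m h s γ) F = evalAt b γ (sigma S 1 s F) := by
  have key : (evalAt b γ).comp (sigma S 1 s) = evalAt b (phiDual f m h s γ) := by
    apply MvPolynomial.algHom_ext
    intro i
    simp only [AlgHom.comp_apply, sigma_X, evalAt, map_smul, aeval_X, smul_eq_mul]
    by_cases hi : i ∈ S
    · rw [if_pos hi, one_mul, show phiDual f m h s γ (b i) = γ (b i) from by
        simp [phiDual, phiQ_of_mem_f h s (hbf i hi)]]
    · rw [if_neg hi, show phiDual f m h s γ (b i) = s * γ (b i) from by
        simp [phiDual, phiQ_of_mem_m h s (hbm i hi)]]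
  rw [← key]
  rfl

include hbf hbm in
lemma diffAt_sigma (s : k) (γ : Module.Dual k q) (H : MvPolynomial (Fin n) k) :
    diffAt b γ (sigma S 1 s H) = phiQ f m h s (diffAt b (phiDual f m h s γ) H) := by
  rw [diffAt, diffAt, map_sum]
  refine Finset.sum_congr rfl fun i _ => ?_
  rw [pderiv_sigma, map_smul, evalAt_phiDual h b S hbf hbm, smul_eq_mul,
    LinearMap.map_smul]
  by_cases hi : i ∈ S
  · rw [if_pos hi, one_mul, phiQ_of_mem_f h s (hbf i hi)]
  · rw [if_neg hi, phiQ_of_mem_m h s (hbm i hi), smul_smul, mul_comm s]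

lemma sigma_diag_lin (t : k) (x : q) : sigma S t t (lin b x) = t • lin b x := by
  simp only [lin, map_sum, map_mul, sigma_C, sigma_X, ite_self, Finset.smul_sum, mul_smul_comm]

lemma sigma_diag_pbr_lin (t : k) (H : MvPolynomial (Fin n) k) (x : q) :
    pbr b (sigma S t t H) (lin b x) = sigma S t t (pbr b H (lin b x)) := by
  unfold pbr
  rw [map_sum]
  refine Finset.sum_congr rfl fun i _ => ?_
  rw [map_sum]
  refine Finset.sum_congr rfl fun j _ => ?_
  rw [map_mul, map_mul, pderiv_sigma, pderiv_lin, sigma_C, sigma_diag_lin, ite_self]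
  rw [smul_mul_assoc, smul_mul_assoc, mul_smul_comm]

lemma sigma_diag_mem_centre (t : k) {H : MvPolynomial (Fin n) k} (hH : H ∈ poissonCentre b) :
    sigma S t t H ∈ poissonCentre b := by
  intro x
  rw [sigma_diag_pbr_lin, hH x, map_zero]

end D

section E

variable (f : LieSubalgebra k q) (m : Submodule k q)

lemma master_core (h : IsCompl f.toSubmodule m)
    (hfm : ∀ a ∈ f, ∀ v ∈ m, ⁅a, v⁆ ∈ m)
    (γ : Module.Dual k q) {s s' : k} (hss' : s ≠ s') (u v : q)
    (hu : ∀ x : q, γ (projF f.toSubmodule m h ⁅u, x⁆)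
        + s * (γ ⁅u, x⁆ - γ (projF f.toSubmodule m h ⁅u, x⁆)) = 0)
    (hv : ∀ x : q, γ (projF f.toSubmodule m h ⁅v, x⁆)
        + s' * (γ ⁅v, x⁆ - γ (projF f.toSubmodule m h ⁅v, x⁆)) = 0) :
    γ ⁅projF f.toSubmodule m h u + s • (u - projF f.toSubmodule m h u),
       projF f.toSubmodule m h v + s' • (v - projF f.toSubmodule m h v)⁆
      = -((1 - s) * (1 - s')) * γ (projF f.toSubmodule m h
          ⁅projF f.toSubmodule m h u, projF f.toSubmodule m h v⁆) := by
  set p := projF f.toSubmodule m h with hp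
  set uf := p u with hufdef
  set vf := p v with hvfdef
  set um := u - p u with humdef
  set vm := v - p v with hvmdef
  have huf : uf ∈ f := projF_mem h u
  have hvf : vf ∈ f := projF_mem h v
  have hum : um ∈ m := sub_projF_mem h u
  have hvm : vm ∈ m := sub_projF_mem h v
  have hdecu : ∀ x : q, ⁅u, x⁆ = ⁅uf, x⁆ + ⁅um, x⁆ := fun x => by
    rw [← add_lie]; congr 1; rw [hufdef, humdef]; abel
  have hdecv : ∀ x : q, ⁅v, x⁆ = ⁅vf, x⁆ + ⁅vm, x⁆ := fun x => by
    rw [← add_lie]; congr 1; rw [hvfdef, hvmdef]; abel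
  -- structural projection facts
  have h1 : p ⁅uf, vf⁆ = ⁅uf, vf⁆ := projF_eq_self h (f.lie_mem huf hvf)
  have h2 : p ⁅uf, vm⁆ = 0 := projF_eq_zero h (hfm uf huf vm hvm)
  have h2' : p ⁅vm, uf⁆ = 0 := by
    have : ⁅vm, uf⁆ ∈ m := by
      rw [show ⁅vm, uf⁆ = -⁅uf, vm⁆ from by rw [lie_skew]]
      exact m.neg_mem (hfm uf huf vm hvm)
    exact projF_eq_zero h this
  have h3 : p ⁅um, vf⁆ = 0 := by
    have : ⁅um, vf⁆ ∈ m := by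
      rw [show ⁅um, vf⁆ = -⁅vf, um⁆ from by rw [lie_skew]]
      exact m.neg_mem (hfm vf hvf um hum)
    exact projF_eq_zero h this
  have h3' : p ⁅vf, um⁆ = 0 := projF_eq_zero h (hfm vf hvf um hum)
  have h1' : p ⁅vf, uf⁆ = ⁅vf, uf⁆ := projF_eq_self h (f.lie_mem hvf huf)
  -- skew-symmetry rewrites
  have hsk1 : γ ⁅vf, uf⁆ = -γ ⁅uf, vf⁆ := by
    rw [show ⁅vf, uf⁆ = -⁅uf, vf⁆ from by rw [lie_skew], map_neg]
  have hsk1p : γ (p ⁅vf, uf⁆) = -γ (p ⁅uf, vf⁆) := by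
    rw [show ⁅vf, uf⁆ = -⁅uf, vf⁆ from by rw [lie_skew], map_neg, map_neg]
  have hsk2 : γ ⁅vm, uf⁆ = -γ ⁅uf, vm⁆ := by
    rw [show ⁅vm, uf⁆ = -⁅uf, vm⁆ from by rw [lie_skew], map_neg]
  have hsk3 : γ ⁅vf, um⁆ = -γ ⁅um, vf⁆ := by
    rw [show ⁅vf, um⁆ = -⁅um, vf⁆ from by rw [lie_skew], map_neg]
  have hsk4 : γ ⁅vm, um⁆ = -γ ⁅um, vm⁆ := by
    rw [show ⁅vm, um⁆ = -⁅um, vm⁆ from by rw [lie_skew], map_neg]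
  have hsk4p : γ (p ⁅vm, um⁆) = -γ (p ⁅um, vm⁆) := by
    rw [show ⁅vm, um⁆ = -⁅um, vm⁆ from by rw [lie_skew], map_neg, map_neg]
  have E1 := hu vf
  have E2 := hu vm
  have E3 := hv uf
  have E4 := hv um
  simp only [hdecu, hdecv, map_add, h1, h2, h2', h3, h3', h1', map_zero] at E1 E2 E3 E4
  rw [hsk1, hsk2] at E3
  rw [hsk3, hsk4, hsk4p] at E4
  -- expand the goal
  simp only [lie_add, add_lie, lie_smul, smul_lie, map_add, map_smul, smul_eq_mul, h1, h2, h3,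
    map_zero]
  have key : (s - s') *
      ((γ ⁅uf, vf⁆ + s' * γ ⁅uf, vm⁆ + (s * γ ⁅um, vf⁆ + s * (s' * γ ⁅um, vm⁆)))
        - (-((1 - s) * (1 - s')) * γ ⁅uf, vf⁆)) = 0 := by
    linear_combination ((s - s') + s' ^ 2 * (1 - s)) * E1 + (s * s' * (1 - s')) * E2
      + (s ^ 2 * (1 - s') - (s - s')) * E3 + (s * s' * (1 - s)) * E4
  have hne : s - s' ≠ 0 := sub_ne_zero.mpr hss'
  have h0 := (mul_eq_zero.mp key).resolve_left hne
  linear_combination h0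
end E

section F1

variable (f : LieSubalgebra k q) (m : Submodule k q)
variable (b : Module.Basis (Fin n) k q) (S : Finset (Fin n))

lemma master (h : IsCompl f.toSubmodule m)
    (hfm : ∀ a ∈ f, ∀ v ∈ m, ⁅a, v⁆ ∈ m)
    (hbf : ∀ i ∈ S, b i ∈ f) (hbm : ∀ i ∉ S, b i ∈ m)
    (γ : Module.Dual k q) {s s' : k} (hss' : s ≠ s')
    {H H' : MvPolynomial (Fin n) k} (hH : H ∈ poissonCentre b) (hH' : H' ∈ poissonCentre b) :
    evalAt b γ (pbr b (sigma S 1 s H) (sigma S 1 s' H'))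
      = -((1 - s) * (1 - s')) * γ (projF f.toSubmodule m h
          ⁅projF f.toSubmodule m h (diffAt b (phiDual f.toSubmodule m h s γ) H),
           projF f.toSubmodule m h (diffAt b (phiDual f.toSubmodule m h s' γ) H')⁆) := by
  have hbf' : ∀ i ∈ S, b i ∈ f.toSubmodule := hbf
  rw [evalAt_pbr, diffAt_sigma h b S hbf' hbm, diffAt_sigma h b S hbf' hbm,
    phiQ_apply h s, phiQ_apply h s']
  refine master_core f m h hfm γ hss' _ _ ?_ ?_
  · intro x
    have h0 := (mem_poissonCentre_iff b H).mp hH (phiDual f.toSubmodule m h s γ) x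
    rwa [phiDual_apply] at h0
  · intro x
    have h0 := (mem_poissonCentre_iff b H').mp hH' (phiDual f.toSubmodule m h s' γ) x
    rwa [phiDual_apply] at h0

lemma biComponent_mem_Zalg (i j : ℕ) {H : MvPolynomial (Fin n) k}
    (hH : H ∈ poissonCentre b) : biComponent S i j H ∈ Zalg b S :=
  Algebra.subset_adjoin ⟨H, hH, i, j, rfl⟩

lemma sigma_mem_Zalg (t s : k) {H : MvPolynomial (Fin n) k}
    (hH : H ∈ poissonCentre b) : sigma S t s H ∈ Zalg b S := by
  rw [sigma_eq_sum_biComponent S t s H H.totalDegree le_rfl]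
  exact Subalgebra.sum_mem _ fun i _ => Subalgebra.sum_mem _ fun j _ =>
    Subalgebra.smul_mem _ (biComponent_mem_Zalg b S i j hH) _

lemma mv_eq_zero_of_eval {N : ℕ} (W g : MvPolynomial (Fin N) k) (hg : g ≠ 0)
    (hW : ∀ x : Fin N → k, MvPolynomial.eval x W = 0 ∨ MvPolynomial.eval x g = 0) : W = 0 := by
  have hWg : W * g = 0 := by
    apply MvPolynomial.funext (q := 0)
    intro x
    rcases hW x with h0 | h0 <;> simp [h0]
  rcases mul_eq_zero.mp hWg with h0 | h0
  · exact h0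
  · exact absurd h0 hg

lemma one_sub_X_ne_zero {N : ℕ} (i : Fin N) :
    (1 - MvPolynomial.X i : MvPolynomial (Fin N) k) ≠ 0 := by
  intro h0
  have := congrArg (MvPolynomial.eval (fun _ => (0 : k))) h0
  simp at this

end F1

section F2

variable (f : LieSubalgebra k q) (m : Submodule k q)
variable (b : Module.Basis (Fin n) k q) (S : Finset (Fin n))

noncomputable def psi (b : Module.Basis (Fin n) k q) (S : Finset (Fin n)) (γ : Module.Dual k q)
    (N : ℕ) (idx : Fin N) : MvPolynomial (Fin n) k →ₐ[k] MvPolynomial (Fin N) k :=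
  MvPolynomial.aeval (fun a => if a ∈ S then MvPolynomial.C (γ (b a))
    else MvPolynomial.C (γ (b a)) * MvPolynomial.X idx)

lemma eval_psi (h : IsCompl f.toSubmodule m)
    (hbf : ∀ i ∈ S, b i ∈ f) (hbm : ∀ i ∉ S, b i ∈ m)
    (γ : Module.Dual k q) {N : ℕ} (idx : Fin N) (x : Fin N → k) (F : MvPolynomial (Fin n) k) :
    MvPolynomial.eval x (psi b S γ N idx F)
      = evalAt b (phiDual f.toSubmodule m h (x idx) γ) F := by
  rw [← aeval_eq_eval']
  have key : (MvPolynomial.aeval x : MvPolynomial (Fin N) k →ₐ[k] k).comp (psi b S γ N idx)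
      = evalAt b (phiDual f.toSubmodule m h (x idx) γ) := by
    apply MvPolynomial.algHom_ext
    intro a
    simp only [AlgHom.comp_apply, psi, aeval_X, evalAt]
    by_cases ha : a ∈ S
    · rw [if_pos ha]
      simp [phiDual, phiQ_of_mem_f h _ (hbf a ha)]
    · rw [if_neg ha]
      simp [phiDual, phiQ_of_mem_m h _ (hbm a ha), mul_comm]
  exact DFunLike.congr_fun key F

lemma forward_dir (h : IsCompl f.toSubmodule m)
    (hfm : ∀ a ∈ f, ∀ v ∈ m, ⁅a, v⁆ ∈ m)
    (hbf : ∀ i ∈ S, b i ∈ f) (hbm : ∀ i ∉ S, b i ∈ m)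
    (hZ : ∀ F ∈ Zalg b S, ∀ G ∈ Zalg b S, pbr b F G = 0)
    (γ : Module.Dual k q) (s s' : k)
    {H H' : MvPolynomial (Fin n) k} (hH : H ∈ poissonCentre b) (hH' : H' ∈ poissonCentre b) :
    γ (projF f.toSubmodule m h
        ⁅projF f.toSubmodule m h (diffAt b (phiDual f.toSubmodule m h s γ) H),
         projF f.toSubmodule m h (diffAt b (phiDual f.toSubmodule m h s' γ) H')⁆) = 0 := by
  set p := projF f.toSubmodule m h with hp
  set Wsum : MvPolynomial (Fin 2) k := ∑ i : Fin n, ∑ i' : Fin n,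
    psi b S γ 2 0 (pderiv i H) * psi b S γ 2 1 (pderiv i' H')
      * MvPolynomial.C (γ (p ⁅p (b i), p (b i')⁆)) with hWsum
  have keyeval : ∀ x : Fin 2 → k, MvPolynomial.eval x Wsum
      = γ (p ⁅p (diffAt b (phiDual f.toSubmodule m h (x 0) γ) H),
            p (diffAt b (phiDual f.toSubmodule m h (x 1) γ) H')⁆) := by
    intro x
    rw [hWsum]
    simp only [map_sum, map_mul, MvPolynomial.eval_C,
      eval_psi f m b S h hbf hbm γ (0 : Fin 2) x, eval_psi f m b S h hbf hbm γ (1 : Fin 2) x]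
    conv_rhs => rw [diffAt, diffAt]
    simp only [map_sum, sum_lie', lie_sum', LinearMap.map_smul, smul_lie, lie_smul, map_smul,
      smul_eq_mul, Finset.mul_sum]
    conv_rhs => rw [Finset.sum_comm]
    refine Finset.sum_congr rfl fun i _ => Finset.sum_congr rfl fun i' _ => ?_
    ring
  have hprod : ((1 - MvPolynomial.X 0) * (1 - MvPolynomial.X 1) * Wsum
      : MvPolynomial (Fin 2) k) = 0 := by
    apply mv_eq_zero_of_eval _ (MvPolynomial.X 0 * MvPolynomial.X 1
      * (MvPolynomial.X 0 - MvPolynomial.X 1))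
    · intro hg0
      have := congrArg (MvPolynomial.eval (fun j : Fin 2 => if j = 0 then (1:k) else 2)) hg0
      norm_num at this
    · intro x
      by_cases h0 : x 0 = 0
      · right; simp [h0]
      by_cases h1 : x 1 = 0
      · right; simp [h1]
      by_cases h01 : x 0 = x 1
      · right; simp [h01]
      left
      have hm := master f m b S h hfm hbf hbm γ h01 hH hH'
      have hz := hZ _ (sigma_mem_Zalg b S 1 (x 0) hH) _ (sigma_mem_Zalg b S 1 (x 1) hH')
      rw [hz, map_zero] at hm
      rw [map_mul, map_mul, keyeval x]
      simp only [map_sub, map_one, MvPolynomial.eval_X]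
      rw [← hp] at hm
      linear_combination hm
  have hW0 : Wsum = 0 := by
    rcases mul_eq_zero.mp hprod with h0 | h0
    · rcases mul_eq_zero.mp h0 with h0' | h0'
      · exact absurd h0' (one_sub_X_ne_zero 0)
      · exact absurd h0' (one_sub_X_ne_zero 1)
    · exact h0
  have hfin := keyeval ![s, s']
  rw [hW0, map_zero] at hfin
  simpa using hfin.symm

end F2

section F3

lemma biComponent_eq_zero_j (S : Finset (Fin n)) (i j : ℕ) (H : MvPolynomial (Fin n) k)
    (hj : H.totalDegree < j) : biComponent S i j H = 0 := by
  rw [biComponent, Finset.filter_false_of_mem, Finset.sum_empty]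
  intro m hm hcond
  have h2 := MvPolynomial.le_totalDegree hm
  rw [Finsupp.sum_fintype] at h2
  · have : (∑ a ∈ Sᶜ, m a) ≤ H.totalDegree :=
      (Finset.sum_le_sum_of_subset (Finset.subset_univ Sᶜ)).trans h2
    omega
  · intro a; rfl

lemma pbr_zero_right (b : Module.Basis (Fin n) k q) (F : MvPolynomial (Fin n) k) : pbr b F 0 = 0 := by
  simp [pbr]

noncomputable def quadMon (a c d e : ℕ) : Fin 4 →₀ ℕ :=
  Finsupp.equivFunOnFinite.symm ![a, c, d, e]

lemma quadMon_apply (a c d e : ℕ) :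
    quadMon a c d e 0 = a ∧ quadMon a c d e 1 = c ∧ quadMon a c d e 2 = d
      ∧ quadMon a c d e 3 = e := by
  refine ⟨?_, ?_, ?_, ?_⟩ <;>
    simp [quadMon]

lemma eval_quadMon (x : Fin 4 → k) (a c d e : ℕ) (v : k) :
    MvPolynomial.eval x (MvPolynomial.monomial (quadMon a c d e) v)
      = v * (x 0 ^ a * x 1 ^ c * x 2 ^ d * x 3 ^ e) := by
  rw [MvPolynomial.eval_monomial, Finsupp.prod_pow, Fin.prod_univ_four,
    (quadMon_apply a c d e).1, (quadMon_apply a c d e).2.1, (quadMon_apply a c d e).2.2.1,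
    (quadMon_apply a c d e).2.2.2]

lemma quad_extract (D1 D2 : ℕ) (e : ℕ → ℕ → ℕ → ℕ → k)
    (hW : (∑ a ∈ Finset.range D1, ∑ b ∈ Finset.range D1, ∑ c ∈ Finset.range D2,
        ∑ d ∈ Finset.range D2,
        MvPolynomial.monomial (quadMon a b c d) (e a b c d)) = 0)
    {a b c d : ℕ} (ha : a ∈ Finset.range D1) (hb : b ∈ Finset.range D1)
    (hc : c ∈ Finset.range D2) (hd : d ∈ Finset.range D2) :
    e a b c d = 0 := by
  have h0 := congrArg (MvPolynomial.coeff (quadMon a b c d)) hW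
  rw [MvPolynomial.coeff_zero] at h0
  simp only [MvPolynomial.coeff_sum, MvPolynomial.coeff_monomial] at h0
  have hcond : ∀ a' b' c' d' : ℕ, (quadMon a' b' c' d' = quadMon a b c d)
      ↔ (a' = a ∧ b' = b ∧ c' = c ∧ d' = d) := by
    intro a' b' c' d'
    constructor
    · intro hEq
      refine ⟨?_, ?_, ?_, ?_⟩
      · rw [← (quadMon_apply a' b' c' d').1, hEq, (quadMon_apply a b c d).1]
      · rw [← (quadMon_apply a' b' c' d').2.1, hEq, (quadMon_apply a b c d).2.1]
      · rw [← (quadMon_apply a' b' c' d').2.2.1, hEq, (quadMon_apply a b c d).2.2.1]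
      · rw [← (quadMon_apply a' b' c' d').2.2.2, hEq, (quadMon_apply a b c d).2.2.2]
    · rintro ⟨rfl, rfl, rfl, rfl⟩; rfl
  simp only [hcond] at h0
  rw [Finset.sum_eq_single_of_mem a ha (fun a' _ hne =>
    Finset.sum_eq_zero fun b' _ => Finset.sum_eq_zero fun c' _ =>
      Finset.sum_eq_zero fun d' _ => by rw [if_neg]; tauto)] at h0
  rw [Finset.sum_eq_single_of_mem b hb (fun b' _ hne =>
    Finset.sum_eq_zero fun c' _ => Finset.sum_eq_zero fun d' _ => by rw [if_neg]; tauto)] at h0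
  rw [Finset.sum_eq_single_of_mem c hc (fun c' _ hne =>
    Finset.sum_eq_zero fun d' _ => by rw [if_neg]; tauto)] at h0
  rw [Finset.sum_eq_single_of_mem d hd (fun d' _ hne => by rw [if_neg]; tauto)] at h0
  rw [if_pos ⟨rfl, rfl, rfl, rfl⟩] at h0
  exact h0

end F3

section F4

variable (f : LieSubalgebra k q) (m : Submodule k q)
variable (b : Module.Basis (Fin n) k q) (S : Finset (Fin n))

lemma backward_dir (h : IsCompl f.toSubmodule m)
    (hfm : ∀ a ∈ f, ∀ v ∈ m, ⁅a, v⁆ ∈ m)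
    (hbf : ∀ i ∈ S, b i ∈ f) (hbm : ∀ i ∉ S, b i ∈ m)
    (hcond : ∀ (γ : Module.Dual k q) (s s' : k), s ≠ 0 → s' ≠ 0 →
        ∀ H ∈ poissonCentre b, ∀ H' ∈ poissonCentre b,
          γ (projF f.toSubmodule m h
            ⁅projF f.toSubmodule m h (diffAt b (phiDual f.toSubmodule m h s γ) H),
             projF f.toSubmodule m h (diffAt b (phiDual f.toSubmodule m h s' γ) H')⁆) = 0) :
    ∀ F ∈ Zalg b S, ∀ G ∈ Zalg b S, pbr b F G = 0 := by
  apply pbr_adjoin_eq_zero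
  rintro P ⟨H, hH, i, j, rfl⟩ P' ⟨H', hH', i', j', rfl⟩
  -- degenerate cases where a bicomponent vanishes
  by_cases hi : i ≤ H.totalDegree
  case neg =>
    rw [biComponent_eq_zero_i S i j H (by omega), pbr_zero_left]
  by_cases hj : j ≤ H.totalDegree
  case neg =>
    rw [biComponent_eq_zero_j S i j H (by omega), pbr_zero_left]
  by_cases hi' : i' ≤ H'.totalDegree
  case neg =>
    rw [biComponent_eq_zero_i S i' j' H' (by omega), pbr_zero_right]
  by_cases hj' : j' ≤ H'.totalDegree
  case neg =>
    rw [biComponent_eq_zero_j S i' j' H' (by omega), pbr_zero_right]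
  apply eq_zero_of_forall_evalAt b
  intro γ
  set D := H.totalDegree with hD
  set D' := H'.totalDegree with hD'
  set e : ℕ → ℕ → ℕ → ℕ → k := fun a c d e' =>
    evalAt b γ (pbr b (biComponent S a c H) (biComponent S d e' H')) with he
  set W4 : MvPolynomial (Fin 4) k := ∑ a ∈ Finset.range (D+1), ∑ c ∈ Finset.range (D+1),
      ∑ d ∈ Finset.range (D'+1), ∑ e' ∈ Finset.range (D'+1),
      MvPolynomial.monomial (quadMon a c d e') (e a c d e') with hW4
  have keyeval : ∀ x : Fin 4 → k, MvPolynomial.eval x W4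
      = evalAt b γ (pbr b (sigma S (x 0) (x 1) H) (sigma S (x 2) (x 3) H')) := by
    intro x
    rw [hW4, sigma_eq_sum_biComponent S (x 0) (x 1) H D le_rfl,
        sigma_eq_sum_biComponent S (x 2) (x 3) H' D' le_rfl]
    simp only [pbr_sum_left, pbr_smul_left]
    simp only [pbr_sum_right, pbr_smul_right]
    simp only [map_sum, map_smul, smul_eq_mul, eval_quadMon, he, Finset.mul_sum]
    refine Finset.sum_congr rfl fun a _ => Finset.sum_congr rfl fun c _ =>
      Finset.sum_congr rfl fun d _ => Finset.sum_congr rfl fun e' _ => ?_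
    ring
  have hW0 : W4 = 0 := by
    apply mv_eq_zero_of_eval _ (MvPolynomial.X 0 * MvPolynomial.X 1 * MvPolynomial.X 2
      * MvPolynomial.X 3 * (MvPolynomial.X 1 * MvPolynomial.X 2
        - MvPolynomial.X 3 * MvPolynomial.X 0))
    · intro hg
      have := congrArg (MvPolynomial.eval (![1, 1, 1, 2] : Fin 4 → k)) hg
      norm_num [Matrix.cons_val_zero, Matrix.cons_val_one, Matrix.head_cons,
        Matrix.cons_val_two, Matrix.cons_val_three, Matrix.tail_cons] at this
    · intro x
      by_cases h0 : x 0 = 0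
      · right; simp [h0]
      by_cases h1 : x 1 = 0
      · right; simp [h1]
      by_cases h2 : x 2 = 0
      · right; simp [h2]
      by_cases h3 : x 3 = 0
      · right; simp [h3]
      by_cases h4 : x 1 * x 2 = x 3 * x 0
      · right; simp [h4]
      left
      rw [keyeval x]
      have hs1 : sigma S 1 (x 1 / x 0) (sigma S (x 0) (x 0) H) = sigma S (x 0) (x 1) H := by
        rw [sigma_comp, one_mul, div_mul_cancel₀ _ h0]
      have hs2 : sigma S 1 (x 3 / x 2) (sigma S (x 2) (x 2) H') = sigma S (x 2) (x 3) H' := by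
        rw [sigma_comp, one_mul, div_mul_cancel₀ _ h2]
      rw [← hs1, ← hs2]
      have hne : x 1 / x 0 ≠ x 3 / x 2 := by
        intro hEq
        exact h4 ((div_eq_div_iff h0 h2).mp hEq)
      rw [master f m b S h hfm hbf hbm γ hne (sigma_diag_mem_centre b S (x 0) hH)
        (sigma_diag_mem_centre b S (x 2) hH')]
      rw [hcond γ (x 1 / x 0) (x 3 / x 2) (div_ne_zero h1 h0) (div_ne_zero h3 h2)
        _ (sigma_diag_mem_centre b S (x 0) hH) _ (sigma_diag_mem_centre b S (x 2) hH'),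
        mul_zero]
  exact quad_extract (D+1) (D'+1) e (hW4 ▸ hW0) (Finset.mem_range.mpr (by omega))
    (Finset.mem_range.mpr (by omega)) (Finset.mem_range.mpr (by omega))
    (Finset.mem_range.mpr (by omega))

end F4

end Aux

/-- Theorem 2.3, the criterion: `Z_{(q,f)}` is Poisson commutative if and
only if `γ_f([(d_{φ_s(γ)}H)_f , (d_{φ_{s'}(γ)}H')_f]) = 0` for every `γ ∈ q*`, all nonzero
`s, s'` and all `H, H'` in the Poisson centre. -/
theorem Zalg_poissonCommutative_iff
    (b : Module.Basis (Fin n) k q) (S : Finset (Fin n))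
    (f : LieSubalgebra k q) (m : Submodule k q)
    (h : IsCompl f.toSubmodule m)
    (hfm : ∀ a ∈ f, ∀ v ∈ m, ⁅a, v⁆ ∈ m)
    (hbf : ∀ i ∈ S, b i ∈ f) (hbm : ∀ i ∉ S, b i ∈ m) :
    (∀ F ∈ Zalg b S, ∀ G ∈ Zalg b S, pbr b F G = 0)
      ↔ (∀ (γ : Module.Dual k q) (s s' : k), s ≠ 0 → s' ≠ 0 →
          ∀ H ∈ poissonCentre b, ∀ H' ∈ poissonCentre b,
            γ (projF f.toSubmodule m h
              ⁅projF f.toSubmodule m h (diffAt b (phiDual f.toSubmodule m h s γ) H),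
               projF f.toSubmodule m h (diffAt b (phiDual f.toSubmodule m h s' γ) H')⁆) = 0) := by
  constructor
  · intro hZ γ s s' hs hs' H hH H' hH'
    exact forward_dir f m b S h hfm hbf hbm hZ γ s s' hH hH'
  · intro hcond
    exact backward_dir f m b S h hfm hbf hbm hcond


end PoissonLie
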